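/- Let b₁, b₂, b₁', b₂' be points on the boundary of the square [-n,n]² such that the segments b₁b₁' and b₂b₂' both intersect the square [-2n^a, 2n^a]² with a < 1, and b₁, b₂ lie on the same 'side' of both segments (i.e., the two segments are 'diametrically opposed' pairs as in the paper). Then max(‖b₁ - b₂‖₁, ‖b₁' - b₂'‖₁) ≤ C n^a for a universal constant C, provided the segments b₁b₁' and b₂b₂' are disjoint and n is large enough. -/

import Mathlib

open Set


lemma sq_frontier {n : ℝ} (hn : 0 < n) {p : ℝ × ℝ}
    (hp : p ∈ frontier (Set.Icc ((-n,-n) : ℝ×ℝ) (n,n))) :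
    |p.1| ≤ n ∧ |p.2| ≤ n ∧ (|p.1| = n ∨ |p.2| = n) := by
  rw [frontier, IsClosed.closure_eq isClosed_Icc, Icc_prod_eq, interior_prod_eq,
    interior_Icc] at hp
  obtain ⟨⟨h1, h2⟩, h3⟩ := hp
  simp only [mem_Icc] at h1 h2
  simp only [mem_prod, mem_Ioo, not_and_or, not_lt, not_and] at h3
  refine ⟨abs_le.2 ⟨h1.1, h1.2⟩, abs_le.2 ⟨h2.1, h2.2⟩, ?_⟩
  rcases h3 with (h | h) | (h | h)
  · left; rw [abs_eq hn.le]; right; linarith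
  · left; rw [abs_eq hn.le]; left; linarith
  · right; rw [abs_eq hn.le]; right; linarith
  · right; rw [abs_eq hn.le]; left; linarith

lemma antip_scalar {n r a t x y x' y' : ℝ} (hn : 0 < n)
    (ha : 0 ≤ a) (ht : 0 ≤ t) (hat : a + t = 1)
    (hx : |x| ≤ n) (hy : |y| ≤ n) (hb : |x| = n ∨ |y| = n)
    (hx' : |x'| ≤ n) (hy' : |y'| ≤ n) (hb' : |x'| = n ∨ |y'| = n)
    (hz1 : |a*x + t*x'| ≤ 2*r) (hz2 : |a*y + t*y'| ≤ 2*r) :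
    |x + x'| ≤ 8*r ∧ |y + y'| ≤ 8*r := by
  obtain ⟨hx1, hx2⟩ := abs_le.mp hx
  obtain ⟨hy1, hy2⟩ := abs_le.mp hy
  obtain ⟨hx'1, hx'2⟩ := abs_le.mp hx'
  obtain ⟨hy'1, hy'2⟩ := abs_le.mp hy'
  obtain ⟨hz11, hz12⟩ := abs_le.mp hz1
  obtain ⟨hz21, hz22⟩ := abs_le.mp hz2
  have key1 : (a - t) * n ≤ 2*r := by
    rcases hb with h | h <;> rcases (abs_eq hn.le).mp h with h' | h' <;> subst h'
    · nlinarith [mul_le_mul_of_nonneg_left hx'1 ht]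
    · nlinarith [mul_le_mul_of_nonneg_left hx'2 ht]
    · nlinarith [mul_le_mul_of_nonneg_left hy'1 ht]
    · nlinarith [mul_le_mul_of_nonneg_left hy'2 ht]
  have key2 : (t - a) * n ≤ 2*r := by
    rcases hb' with h | h <;> rcases (abs_eq hn.le).mp h with h' | h' <;> subst h'
    · nlinarith [mul_le_mul_of_nonneg_left hx1 ha]
    · nlinarith [mul_le_mul_of_nonneg_left hx2 ha]
    · nlinarith [mul_le_mul_of_nonneg_left hy1 ha]
    · nlinarith [mul_le_mul_of_nonneg_left hy2 ha]
  have hkey : |a - t| * n ≤ 2*r := by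
    rcases abs_cases (a - t) with ⟨h, _⟩ | ⟨h, _⟩
    · rw [h]; exact key1
    · rw [h]; have : -(a-t) * n = (t-a)*n := by ring
      rw [this]; exact key2
  have hbd : ∀ u v : ℝ, -n ≤ u → u ≤ n → -n ≤ v → v ≤ n →
      |(a-t)*(u-v)| ≤ 4*r := by
    intro u v h1 h2 h3 h4
    rw [abs_mul]
    have h5 : |u - v| ≤ 2*n := by rw [abs_le]; constructor <;> linarith
    have h6 : |a-t| * |u-v| ≤ |a-t| * (2*n) :=
      mul_le_mul_of_nonneg_left h5 (abs_nonneg _)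
    linarith
  constructor
  · have hxid : x + x' = 2*(a*x + t*x') - (a-t)*(x-x') := by
      linear_combination (-(x + x'))*hat
    calc |x + x'| = |2*(a*x+t*x') - (a-t)*(x-x')| := by rw [← hxid]
      _ ≤ |2*(a*x+t*x')| + |(a-t)*(x-x')| := abs_sub _ _
      _ ≤ 2*(2*r) + 4*r := by
          refine add_le_add ?_ (hbd x x' hx1 hx2 hx'1 hx'2)
          rw [abs_mul, abs_two]; linarith [abs_nonneg (a*x+t*x')]
      _ = 8*r := by ring
  · have hyid : y + y' = 2*(a*y + t*y') - (a-t)*(y-y') := by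
      linear_combination (-(y + y'))*hat
    calc |y + y'| = |2*(a*y+t*y') - (a-t)*(y-y')| := by rw [← hyid]
      _ ≤ |2*(a*y+t*y')| + |(a-t)*(y-y')| := abs_sub _ _
      _ ≤ 2*(2*r) + 4*r := by
          refine add_le_add ?_ (hbd y y' hy1 hy2 hy'1 hy'2)
          rw [abs_mul, abs_two]; linarith [abs_nonneg (a*y+t*y')]
      _ = 8*r := by ring

lemma coordLB {n t β β' ζ : ℝ} (hβ' : |β'| ≤ n) (hζ : |ζ| ≤ n)
    (hβo : |β| = n) (hne : β ≠ β') (hζt : ζ = β + t*(β' - β)) : 0 ≤ t := by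
  have hn0 : 0 ≤ n := hβo ▸ abs_nonneg β
  obtain ⟨hβ'1, hβ'2⟩ := abs_le.mp hβ'
  obtain ⟨hζ1, hζ2⟩ := abs_le.mp hζ
  by_contra h
  push_neg at h
  rcases (abs_eq hn0).mp hβo with hb | hb
  · have hw : β' - β < 0 := by
      rw [hb]; rw [hb] at hne
      have : β' < n := lt_of_le_of_ne hβ'2 (fun e => hne e.symm)
      linarith
    nlinarith [mul_pos_of_neg_of_neg h hw]
  · have hw : 0 < β' - β := by
      rw [hb]; rw [hb] at hne
      have : -n < β' := lt_of_le_of_ne hβ'1 (fun e => hne e)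
      linarith
    nlinarith [mul_neg_of_neg_of_pos h hw]

lemma chord_mem {n r : ℝ} (hn : 0 < n) (h2r : 2*r < n) {b b' : ℝ × ℝ}
    (hb1 : |b.1| ≤ n) (hb2 : |b.2| ≤ n) (hbo : |b.1| = n ∨ |b.2| = n)
    (hb'1 : |b'.1| ≤ n) (hb'2 : |b'.2| ≤ n) (hb'o : |b'.1| = n ∨ |b'.2| = n)
    (hbox : ∃ u ∈ segment ℝ b b', |u.1| ≤ 2*r ∧ |u.2| ≤ 2*r)
    {z : ℝ × ℝ} (hz1 : |z.1| ≤ n) (hz2 : |z.2| ≤ n)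
    (hcross : (b'.1-b.1)*(z.2-b.2) = (b'.2-b.2)*(z.1-b.1)) :
    z ∈ segment ℝ b b' := by
  obtain ⟨u, hu, hu1, hu2⟩ := hbox
  obtain ⟨c, d, hc, hd, hcd, huu⟩ := hu
  have hufst : c*b.1 + d*b'.1 = u.1 := by rw [← huu]; simp
  have husnd : c*b.2 + d*b'.2 = u.2 := by rw [← huu]; simp
  have hsame1 : b.1 = b'.1 → |b.1| < n := by
    intro h
    have : u.1 = b.1 := by rw [← hufst, ← h]; linear_combination b.1 * hcd
    rw [← this]; linarith
  have hsame2 : b.2 = b'.2 → |b.2| < n := by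
    intro h
    have : u.2 = b.2 := by rw [← husnd, ← h]; linear_combination b.2 * hcd
    rw [← this]; linarith
  -- find the parameter t
  obtain ⟨t, ht1, ht2⟩ : ∃ t : ℝ, z.1 = b.1 + t*(b'.1-b.1) ∧ z.2 = b.2 + t*(b'.2-b.2) := by
    rcases eq_or_ne (b'.1 - b.1) 0 with hw1 | hw1
    · have hb11 : b.1 = b'.1 := by linarith [sub_eq_zero.mp hw1]
      have hw2 : b'.2 - b.2 ≠ 0 := by
        intro hw2
        have hb22 : b.2 = b'.2 := by linarith [sub_eq_zero.mp hw2]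
        rcases hbo with h | h
        · exact absurd h (ne_of_lt (hsame1 hb11))
        · exact absurd h (ne_of_lt (hsame2 hb22))
      refine ⟨(z.2 - b.2)/(b'.2 - b.2), ?_, ?_⟩
      · have h0 : (b'.2 - b.2) * (z.1 - b.1) = 0 := by
          have h' := hcross; rw [hw1, zero_mul] at h'; exact h'.symm
        have : z.1 - b.1 = 0 := by
          rcases mul_eq_zero.mp h0 with h | h
          · exact absurd h hw2
          · exact h
        rw [hw1, mul_zero]; linarith
      · rw [div_mul_cancel₀ _ hw2]; ring
    · refine ⟨(z.1 - b.1)/(b'.1 - b.1), ?_, ?_⟩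
      · field_simp; ring
      · have h0 : z.2 - b.2 = (z.1 - b.1) * (b'.2 - b.2) / (b'.1 - b.1) := by
          rw [eq_div_iff hw1]; linear_combination hcross
        rw [div_mul_eq_mul_div]
        linarith [h0]
  -- 0 ≤ t
  have ht0 : 0 ≤ t := by
    rcases hbo with h | h
    · have hne : b.1 ≠ b'.1 := fun e => absurd h (ne_of_lt (hsame1 e))
      exact coordLB hb'1 hz1 h hne ht1
    · have hne : b.2 ≠ b'.2 := fun e => absurd h (ne_of_lt (hsame2 e))
      exact coordLB hb'2 hz2 h hne ht2
  -- t ≤ 1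
  have htone : t ≤ 1 := by
    have ht1' : z.1 = b'.1 + (1-t)*(b.1 - b'.1) := by rw [ht1]; ring
    have ht2' : z.2 = b'.2 + (1-t)*(b.2 - b'.2) := by rw [ht2]; ring
    have h01 : 0 ≤ 1 - t := by
      rcases hb'o with h | h
      · have hne : b'.1 ≠ b.1 := by
          intro e; exact absurd h (ne_of_lt (e ▸ hsame1 e.symm))
        exact coordLB hb1 hz1 h hne ht1'
      · have hne : b'.2 ≠ b.2 := by
          intro e; exact absurd h (ne_of_lt (e ▸ hsame2 e.symm))
        exact coordLB hb2 hz2 h hne ht2'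
    linarith
  rw [segment_eq_image']
  refine ⟨t, ⟨ht0, htone⟩, ?_⟩
  have : (b + t • (b' - b)).1 = b.1 + t * (b'.1 - b.1) := by simp
  have h2 : (b + t • (b' - b)).2 = b.2 + t * (b'.2 - b.2) := by simp
  ext
  · rw [this, ← ht1]
  · rw [h2, ← ht2]

/-- Boundary points in a narrow central slab are close or antipodally close. -/
lemma slab {n r y₁ x₂ y₂ : ℝ} (hn : 0 < n) (hr : 0 < r) (h48 : 48*r < n)
    (hy₁ : |y₁| ≤ n)
    (hx₂ : |x₂| ≤ n) (hy₂ : |y₂| ≤ n) (hb₂ : |x₂| = n ∨ |y₂| = n)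
    (hK : |n*y₂ - y₁*x₂| ≤ 48*r*n) :
    (|n-x₂| + |y₁-y₂| ≤ 144*r) ∨ (|n+x₂| + |y₁+y₂| ≤ 144*r) := by
  obtain ⟨hK1, hK2⟩ := abs_le.mp hK
  obtain ⟨hy₁1, hy₁2⟩ := abs_le.mp hy₁
  obtain ⟨hx₂1, hx₂2⟩ := abs_le.mp hx₂
  obtain ⟨hy₂1, hy₂2⟩ := abs_le.mp hy₂
  -- |x₂| is close to n
  have hbig : n - 48*r ≤ |x₂| := by
    have h1 : |n*y₂| - |y₁*x₂| ≤ |n*y₂ - y₁*x₂| := abs_sub_abs_le_abs_sub _ _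
    have h2 : |n*y₂| = n*|y₂| := by rw [abs_mul, abs_of_pos hn]
    have h3 : |y₁*x₂| ≤ n*|x₂| := by
      rw [abs_mul]; exact mul_le_mul_of_nonneg_right hy₁ (abs_nonneg _)
    have h4 : n*|y₂| ≤ n*|x₂| + 48*r*n := by linarith
    rcases hb₂ with h | h
    · rw [h]; linarith
    · rw [h] at h4
      have h5 : n*n ≤ n*(|x₂| + 48*r) := by linarith
      have h6 : n ≤ |x₂| + 48*r := le_of_mul_le_mul_left h5 hn
      linarith
  have hx₂ne : x₂ ≠ 0 := by
    intro h; rw [h, abs_zero] at hbig; linarith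
  rcases lt_or_gt_of_ne hx₂ne with hneg | hpos
  · -- antipodal case
    right
    have habs : |x₂| = -x₂ := abs_of_neg hneg
    rw [habs] at hbig
    have hxc : |n + x₂| ≤ 48*r := by rw [abs_le]; constructor <;> linarith
    have hyy : |y₁*(n + x₂)| ≤ n*(48*r) := by
      rw [abs_mul]
      exact mul_le_mul hy₁ hxc (abs_nonneg _) hn.le
    obtain ⟨hyy1, hyy2⟩ := abs_le.mp hyy
    have hyc : |y₁ + y₂| ≤ 96*r := by
      rw [abs_le]; constructor
      · have h7 : n*(-(96*r)) ≤ n*(y₁+y₂) := by nlinarith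
        have := le_of_mul_le_mul_left h7 hn
        linarith
      · have h7 : n*(y₁+y₂) ≤ n*(96*r) := by nlinarith
        have := le_of_mul_le_mul_left h7 hn
        linarith
    linarith
  · left
    have habs : |x₂| = x₂ := abs_of_pos hpos
    rw [habs] at hbig
    have hxc : |n - x₂| ≤ 48*r := by rw [abs_le]; constructor <;> linarith
    have hyy : |y₁*(n - x₂)| ≤ n*(48*r) := by
      rw [abs_mul]
      exact mul_le_mul hy₁ hxc (abs_nonneg _) hn.le
    obtain ⟨hyy1, hyy2⟩ := abs_le.mp hyy
    have hyc : |y₁ - y₂| ≤ 96*r := by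
      rw [abs_le]; constructor
      · have h7 : n*(-(96*r)) ≤ n*(y₁-y₂) := by nlinarith
        have := le_of_mul_le_mul_left h7 hn
        linarith
      · have h7 : n*(y₁-y₂) ≤ n*(96*r) := by nlinarith
        have := le_of_mul_le_mul_left h7 hn
        linarith
    linarith

lemma slab' {n r x₁ y₁ x₂ y₂ : ℝ} (hn : 0 < n) (hr : 0 < r) (h48 : 48*r < n)
    (hx₁ : |x₁| ≤ n) (hy₁ : |y₁| ≤ n) (hb₁ : |x₁| = n ∨ |y₁| = n)
    (hx₂ : |x₂| ≤ n) (hy₂ : |y₂| ≤ n) (hb₂ : |x₂| = n ∨ |y₂| = n)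
    (hK : |x₁*y₂ - y₁*x₂| ≤ 48*r*n) :
    (|x₁-x₂| + |y₁-y₂| ≤ 144*r) ∨ (|x₁+x₂| + |y₁+y₂| ≤ 144*r) := by
  rcases hb₁ with h | h <;> rcases (abs_eq hn.le).mp h with h' | h'
  · -- x₁ = n
    subst h'
    exact slab hn hr h48 hy₁ hx₂ hy₂ hb₂ hK
  · -- x₁ = -n
    have hK' : |n*(-y₂) - (-y₁)*(-x₂)| ≤ 48*r*n := by
      rw [show n*(-y₂) - (-y₁)*(-x₂) = x₁*y₂ - y₁*x₂ by rw [h']; ring]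
      exact hK
    have hy₁' : |(-y₁)| ≤ n := by rwa [abs_neg]
    have hx₂' : |(-x₂)| ≤ n := by rwa [abs_neg]
    have hy₂' : |(-y₂)| ≤ n := by rwa [abs_neg]
    have hb₂' : |(-x₂)| = n ∨ |(-y₂)| = n := by rwa [abs_neg, abs_neg]
    rcases slab hn hr h48 hy₁' hx₂' hy₂' hb₂' hK' with hc | hc
    · left
      rw [show x₁ - x₂ = -(n - -x₂) by rw [h']; ring, abs_neg,
        show y₁ - y₂ = -((-y₁) - (-y₂)) by ring, abs_neg]
      exact hc
    · right
      rw [show x₁ + x₂ = -(n + -x₂) by rw [h']; ring, abs_neg,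
        show y₁ + y₂ = -((-y₁) + (-y₂)) by ring, abs_neg]
      exact hc
  · -- y₁ = n
    have hK' : |n*x₂ - x₁*y₂| ≤ 48*r*n := by
      rw [show n*x₂ - x₁*y₂ = -(x₁*y₂ - y₁*x₂) by rw [h']; ring, abs_neg]; exact hK
    rcases slab hn hr h48 hx₁ hy₂ hx₂ hb₂.symm hK' with hc | hc
    · left
      rw [show y₁ - y₂ = n - y₂ by rw [h']]
      linarith
    · right
      rw [show y₁ + y₂ = n + y₂ by rw [h']]
      linarith
  · -- y₁ = -n
    have hK' : |n*(-x₂) - (-x₁)*(-y₂)| ≤ 48*r*n := by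
      rw [show n*(-x₂) - (-x₁)*(-y₂) = -(x₁*y₂ - y₁*x₂) by rw [h']; ring, abs_neg]
      exact hK
    have hx₁' : |(-x₁)| ≤ n := by rwa [abs_neg]
    have hx₂' : |(-x₂)| ≤ n := by rwa [abs_neg]
    have hy₂' : |(-y₂)| ≤ n := by rwa [abs_neg]
    have hb₂' : |(-y₂)| = n ∨ |(-x₂)| = n := by rw [abs_neg, abs_neg]; exact hb₂.symm
    rcases slab hn hr h48 hx₁' hy₂' hx₂' hb₂' hK' with hc | hc
    · left
      rw [show y₁ - y₂ = -(n - -y₂) by rw [h']; ring, abs_neg,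
        show x₁ - x₂ = -((-x₁) - (-x₂)) by ring, abs_neg]
      linarith
    · right
      rw [show y₁ + y₂ = -(n + -y₂) by rw [h']; ring, abs_neg,
        show x₁ + x₂ = -((-x₁) + (-x₂)) by ring, abs_neg]
      linarith

lemma cross_sign {b b' p p' : ℝ × ℝ}
    (hzero : ∀ z ∈ segment ℝ p p',
      (b'.1-b.1)*(z.2-b.2) ≠ (b'.2-b.2)*(z.1-b.1))
    (hApos : 0 < (b'.1-b.1)*(p.2-b.2) - (b'.2-b.2)*(p.1-b.1))
    (hA'neg : (b'.1-b.1)*(p'.2-b.2) - (b'.2-b.2)*(p'.1-b.1) < 0) : False := by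
  set A := (b'.1-b.1)*(p.2-b.2) - (b'.2-b.2)*(p.1-b.1) with hAdef
  set A' := (b'.1-b.1)*(p'.2-b.2) - (b'.2-b.2)*(p'.1-b.1) with hA'def
  have hden : 0 < A - A' := by linarith
  set t := A / (A - A') with htdef
  have ht0 : 0 ≤ t := div_nonneg hApos.le hden.le
  have ht1 : t ≤ 1 := (div_le_one hden).mpr (by linarith)
  have htm : t * (A - A') = A := div_mul_cancel₀ _ hden.ne'
  set z := p + t • (p' - p) with hzdef
  have hzmem : z ∈ segment ℝ p p' := by
    rw [segment_eq_image']; exact ⟨t, ⟨ht0, ht1⟩, rfl⟩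
  apply hzero z hzmem
  have hz1 : z.1 = p.1 + t * (p'.1 - p.1) := by rw [hzdef]; simp
  have hz2 : z.2 = p.2 + t * (p'.2 - p.2) := by rw [hzdef]; simp
  rw [hz1, hz2]
  rw [hAdef, hA'def] at htm
  linear_combination -htm
/-- two disjoint segments crossing the central box
`[-2n^a, 2n^a]²` with endpoints on the boundary of `[-n,n]²` have nearby
endpoints on each side (the labelling hypotheses encode that `b₁, b₂`, resp.
`b₁'`, `b₂'`, are the "diametrically opposed" pairs). -/
theorem stmt_10 :
    ∃ C : ℝ, 0 < C ∧
      ∀ a : ℝ, 0 < a → a < 1 →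
        ∃ n₀ : ℕ, ∀ n : ℕ, n₀ ≤ n →
          ∀ b₁ b₂ b₁' b₂' : ℝ × ℝ,
            b₁ ∈ frontier (Set.Icc ((-(n : ℝ), -(n : ℝ)) : ℝ × ℝ) ((n : ℝ), (n : ℝ))) →
            b₂ ∈ frontier (Set.Icc ((-(n : ℝ), -(n : ℝ)) : ℝ × ℝ) ((n : ℝ), (n : ℝ))) →
            b₁' ∈ frontier (Set.Icc ((-(n : ℝ), -(n : ℝ)) : ℝ × ℝ) ((n : ℝ), (n : ℝ))) →
            b₂' ∈ frontier (Set.Icc ((-(n : ℝ), -(n : ℝ)) : ℝ × ℝ) ((n : ℝ), (n : ℝ))) →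
            (segment ℝ b₁ b₁' ∩
              Set.Icc ((-(2 * (n : ℝ) ^ a), -(2 * (n : ℝ) ^ a)) : ℝ × ℝ)
                ((2 * (n : ℝ) ^ a), (2 * (n : ℝ) ^ a))).Nonempty →
            (segment ℝ b₂ b₂' ∩
              Set.Icc ((-(2 * (n : ℝ) ^ a), -(2 * (n : ℝ) ^ a)) : ℝ × ℝ)
                ((2 * (n : ℝ) ^ a), (2 * (n : ℝ) ^ a))).Nonempty →
            Disjoint (segment ℝ b₁ b₁') (segment ℝ b₂ b₂') →
            (|(b₁ - b₂).1| + |(b₁ - b₂).2| ≤ |(b₁ - b₂').1| + |(b₁ - b₂').2|) →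
            (|(b₁' - b₂').1| + |(b₁' - b₂').2| ≤ |(b₁' - b₂).1| + |(b₁' - b₂).2|) →
            max (|(b₁ - b₂).1| + |(b₁ - b₂).2|) (|(b₁' - b₂').1| + |(b₁' - b₂').2|)
              ≤ C * (n : ℝ) ^ a := by
  refine ⟨200, by norm_num, fun a ha ha1 => ?_⟩
  have h1a : (0:ℝ) < 1 - a := by linarith
  have htend : Filter.Tendsto (fun n : ℕ => (n:ℝ)^(1-a)) Filter.atTop Filter.atTop :=
    (tendsto_rpow_atTop h1a).comp tendsto_natCast_atTop_atTop
  obtain ⟨n₀, hn₀⟩ := Filter.eventually_atTop.mp (htend.eventually_gt_atTop 48)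
  refine ⟨max n₀ 1, fun n hn => ?_⟩
  have hn1 : (1:ℕ) ≤ n := le_trans (le_max_right _ _) hn
  have hnn : n₀ ≤ n := le_trans (le_max_left _ _) hn
  have hnpos : (0:ℝ) < n := by exact_mod_cast Nat.lt_of_lt_of_le Nat.zero_lt_one hn1
  set r := (n:ℝ)^a with hrdef
  have hr : 0 < r := Real.rpow_pos_of_pos hnpos a
  have h48 : 48*r < n := by
    have h := hn₀ n hnn
    have hmul : r * (n:ℝ)^(1-a) = n := by
      rw [← Real.rpow_add hnpos]
      norm_num
    nlinarith [mul_lt_mul_of_pos_left h hr]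
  have h2r : 2*r < (n:ℝ) := by linarith
  intro b₁ b₂ b₁' b₂' hb₁ hb₂ hb₁' hb₂' hseg₁ hseg₂ hdisj hpair₁ _hpair₂
  obtain ⟨hx₁, hy₁, hbo₁⟩ := sq_frontier hnpos hb₁
  obtain ⟨hx₂, hy₂, hbo₂⟩ := sq_frontier hnpos hb₂
  obtain ⟨hx₁', hy₁', hbo₁'⟩ := sq_frontier hnpos hb₁'
  obtain ⟨hx₂', hy₂', hbo₂'⟩ := sq_frontier hnpos hb₂'
  -- extract box points and antipodal bounds
  have hbox : ∀ b b' : ℝ × ℝ,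
      |b.1| ≤ (n:ℝ) → |b.2| ≤ n → (|b.1| = n ∨ |b.2| = n) →
      |b'.1| ≤ n → |b'.2| ≤ n → (|b'.1| = n ∨ |b'.2| = n) →
      (segment ℝ b b' ∩
        Set.Icc ((-(2 * r), -(2 * r)) : ℝ × ℝ) ((2 * r), (2 * r))).Nonempty →
      (|b.1 + b'.1| ≤ 8*r ∧ |b.2 + b'.2| ≤ 8*r) ∧
        (∃ u ∈ segment ℝ b b', |u.1| ≤ 2*r ∧ |u.2| ≤ 2*r) := by
    intro b b' h1 h2 h3 h4 h5 h6 ⟨z, hzseg, hzbox⟩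
    rw [Set.mem_Icc, Prod.le_def, Prod.le_def] at hzbox
    obtain ⟨⟨hl1, hl2⟩, ⟨hu1, hu2⟩⟩ := hzbox
    simp only at hl1 hl2 hu1 hu2
    have hz1 : |z.1| ≤ 2*r := abs_le.mpr ⟨by linarith, hu1⟩
    have hz2 : |z.2| ≤ 2*r := abs_le.mpr ⟨by linarith, hu2⟩
    refine ⟨?_, z, hzseg, hz1, hz2⟩
    obtain ⟨c, d, hc, hd, hcd, hsum⟩ := hzseg
    have hf : c*b.1 + d*b'.1 = z.1 := by rw [← hsum]; simp
    have hs : c*b.2 + d*b'.2 = z.2 := by rw [← hsum]; simp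
    exact antip_scalar hnpos hc hd hcd h1 h2 h3 h4 h5 h6
      (by rw [hf]; exact hz1) (by rw [hs]; exact hz2)
  obtain ⟨⟨he₁x, he₁y⟩, hbox₁⟩ :=
    hbox b₁ b₁' hx₁ hy₁ hbo₁ hx₁' hy₁' hbo₁' hseg₁
  obtain ⟨⟨he₂x, he₂y⟩, _⟩ :=
    hbox b₂ b₂' hx₂ hy₂ hbo₂ hx₂' hy₂' hbo₂' hseg₂
  -- segment b₂ b₂' lies in the square
  have hsq : ∀ p : ℝ × ℝ, |p.1| ≤ (n:ℝ) → |p.2| ≤ n →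
      p ∈ Set.Icc ((-(n:ℝ), -(n:ℝ)) : ℝ × ℝ) ((n:ℝ), (n:ℝ)) := by
    intro p h1 h2
    obtain ⟨h11, h12⟩ := abs_le.mp h1
    obtain ⟨h21, h22⟩ := abs_le.mp h2
    rw [Set.mem_Icc, Prod.le_def, Prod.le_def]
    exact ⟨⟨h11, h21⟩, h12, h22⟩
  have hsub : segment ℝ b₂ b₂' ⊆
      Set.Icc ((-(n:ℝ), -(n:ℝ)) : ℝ × ℝ) ((n:ℝ), (n:ℝ)) :=
    (convex_Icc _ _).segment_subset (hsq b₂ hx₂ hy₂) (hsq b₂' hx₂' hy₂')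
  -- the cross product of b₁b₁' does not vanish on segment b₂ b₂'
  have hzero : ∀ z ∈ segment ℝ b₂ b₂',
      (b₁'.1-b₁.1)*(z.2-b₁.2) ≠ (b₁'.2-b₁.2)*(z.1-b₁.1) := by
    intro z hz heq
    have hzIcc := hsub hz
    rw [Set.mem_Icc, Prod.le_def, Prod.le_def] at hzIcc
    obtain ⟨⟨hl1, hl2⟩, ⟨hu1, hu2⟩⟩ := hzIcc
    simp only at hl1 hl2 hu1 hu2
    have hz1 : |z.1| ≤ (n:ℝ) := abs_le.mpr ⟨by linarith, hu1⟩
    have hz2 : |z.2| ≤ (n:ℝ) := abs_le.mpr ⟨by linarith, hu2⟩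
    have hmem : z ∈ segment ℝ b₁ b₁' :=
      chord_mem hnpos h2r hx₁ hy₁ hbo₁ hx₁' hy₁' hbo₁' hbox₁ hz1 hz2 heq
    exact Set.disjoint_left.mp hdisj hmem hz
  -- signs of the cross products at b₂ and b₂'
  set A := (b₁'.1-b₁.1)*(b₂.2-b₁.2) - (b₁'.2-b₁.2)*(b₂.1-b₁.1) with hAdef
  set A' := (b₁'.1-b₁.1)*(b₂'.2-b₁.2) - (b₁'.2-b₁.2)*(b₂'.1-b₁.1) with hA'def
  have hA : A ≠ 0 :=
    sub_ne_zero_of_ne (hzero b₂ (left_mem_segment ℝ b₂ b₂'))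
  have hA' : A' ≠ 0 :=
    sub_ne_zero_of_ne (hzero b₂' (right_mem_segment ℝ b₂ b₂'))
  have hsign : 0 < A * A' := by
    rcases (mul_ne_zero hA hA').lt_or_gt with hlt | hpos
    · exfalso
      rcases mul_neg_iff.mp hlt with ⟨h1, h2⟩ | ⟨h1, h2⟩
      · exact cross_sign hzero h1 h2
      · refine cross_sign (b := b₁) (b' := b₁') (p := b₂') (p' := b₂)
          (fun z hz => hzero z ?_) h2 h1
        rwa [segment_symm]
    · exact hpos
  -- |A| ≤ |A + A'| ≤ 64 r n
  have habs : |A| ≤ |A + A'| := by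
    rcases mul_pos_iff.mp hsign with ⟨h1, h2⟩ | ⟨h1, h2⟩
    · rw [abs_of_pos h1, abs_of_pos (by linarith : (0:ℝ) < A + A')]; linarith
    · rw [abs_of_neg h1, abs_of_neg (by linarith : A + A' < 0)]; linarith
  have hAA' : |A + A'| ≤ 64*r*n := by
    have hid : A + A' = (b₁'.1-b₁.1)*((b₂.2+b₂'.2) - (b₁.2+b₁'.2))
        - (b₁'.2-b₁.2)*((b₂.1+b₂'.1) - (b₁.1+b₁'.1)) := by
      rw [hAdef, hA'def]; ring
    have hw1 : |b₁'.1-b₁.1| ≤ 2*n := (abs_sub _ _).trans (by linarith)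
    have hw2 : |b₁'.2-b₁.2| ≤ 2*n := (abs_sub _ _).trans (by linarith)
    have hv : |(b₂.2+b₂'.2) - (b₁.2+b₁'.2)| ≤ 16*r := (abs_sub _ _).trans (by linarith)
    have hu : |(b₂.1+b₂'.1) - (b₁.1+b₁'.1)| ≤ 16*r := (abs_sub _ _).trans (by linarith)
    calc |A + A'| ≤ |(b₁'.1-b₁.1)*((b₂.2+b₂'.2) - (b₁.2+b₁'.2))|
          + |(b₁'.2-b₁.2)*((b₂.1+b₂'.1) - (b₁.1+b₁'.1))| := by
          rw [hid]; exact abs_sub _ _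
      _ ≤ (2*n)*(16*r) + (2*n)*(16*r) := by
          rw [abs_mul, abs_mul]
          exact add_le_add
            (mul_le_mul hw1 hv (abs_nonneg _) (by linarith))
            (mul_le_mul hw2 hu (abs_nonneg _) (by linarith))
      _ = 64*r*n := by ring
  have hAbd : |A| ≤ 64*r*n := habs.trans hAA'
  -- the central cross product of b₁ and b₂ is small
  have hK : |b₁.1*b₂.2 - b₁.2*b₂.1| ≤ 48*r*n := by
    have hid2 : 2*(b₁.1*b₂.2 - b₁.2*b₂.1) =
        (b₁.1+b₁'.1)*(b₂.2-b₁.2) - (b₁.2+b₁'.2)*(b₂.1-b₁.1) - A := by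
      rw [hAdef]; ring
    have hd1 : |(b₁.1+b₁'.1)*(b₂.2-b₁.2)| ≤ (8*r)*(2*n) := by
      rw [abs_mul]
      exact mul_le_mul he₁x ((abs_sub _ _).trans (by linarith)) (abs_nonneg _)
        (by linarith)
    have hd2 : |(b₁.2+b₁'.2)*(b₂.1-b₁.1)| ≤ (8*r)*(2*n) := by
      rw [abs_mul]
      exact mul_le_mul he₁y ((abs_sub _ _).trans (by linarith)) (abs_nonneg _)
        (by linarith)
    have h2K : |2*(b₁.1*b₂.2 - b₁.2*b₂.1)| ≤ 96*r*n := by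
      rw [hid2]
      calc |(b₁.1+b₁'.1)*(b₂.2-b₁.2) - (b₁.2+b₁'.2)*(b₂.1-b₁.1) - A|
          ≤ |(b₁.1+b₁'.1)*(b₂.2-b₁.2) - (b₁.2+b₁'.2)*(b₂.1-b₁.1)| + |A| :=
            abs_sub _ _
        _ ≤ (|(b₁.1+b₁'.1)*(b₂.2-b₁.2)| + |(b₁.2+b₁'.2)*(b₂.1-b₁.1)|) + |A| :=
            add_le_add_left (abs_sub _ _) _
        _ ≤ ((8*r)*(2*n) + (8*r)*(2*n)) + 64*r*n := by
            exact add_le_add (add_le_add hd1 hd2) hAbd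
        _ = 96*r*n := by ring
    rw [abs_mul, abs_two] at h2K
    linarith
  -- slab dichotomy
  have hdich := slab' hnpos hr h48 hx₁ hy₁ hbo₁ hx₂ hy₂ hbo₂
    hK
  -- conclude
  simp only [Prod.fst_sub, Prod.snd_sub] at hpair₁ ⊢
  have hd12 : |b₁.1 - b₂.1| + |b₁.2 - b₂.2| ≤ 160*r := by
    rcases hdich with hc | hc
    · linarith
    · have h1 : |b₁.1 - b₂'.1| ≤ |b₁.1 + b₂.1| + |b₂.1 + b₂'.1| := by
        have : b₁.1 - b₂'.1 = (b₁.1 + b₂.1) - (b₂.1 + b₂'.1) := by ring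
        rw [this]; exact abs_sub _ _
      have h2 : |b₁.2 - b₂'.2| ≤ |b₁.2 + b₂.2| + |b₂.2 + b₂'.2| := by
        have : b₁.2 - b₂'.2 = (b₁.2 + b₂.2) - (b₂.2 + b₂'.2) := by ring
        rw [this]; exact abs_sub _ _
      linarith
  have hd12' : |b₁'.1 - b₂'.1| + |b₁'.2 - b₂'.2| ≤ 192*r := by
    have h1 : |b₁'.1 - b₂'.1| ≤ |b₁.1 + b₁'.1| + |b₂.1 + b₂'.1| + |b₁.1 - b₂.1| := by
      have : b₁'.1 - b₂'.1 = (b₁.1 + b₁'.1) - (b₂.1 + b₂'.1) - (b₁.1 - b₂.1) := by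
        ring
      rw [this]
      exact (abs_sub _ _).trans (add_le_add_left (abs_sub _ _) _)
    have h2 : |b₁'.2 - b₂'.2| ≤ |b₁.2 + b₁'.2| + |b₂.2 + b₂'.2| + |b₁.2 - b₂.2| := by
      have : b₁'.2 - b₂'.2 = (b₁.2 + b₁'.2) - (b₂.2 + b₂'.2) - (b₁.2 - b₂.2) := by
        ring
      rw [this]
      exact (abs_sub _ _).trans (add_le_add_left (abs_sub _ _) _)
    linarith
  exact max_le (by linarith) (by linarith)
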